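/- Let κ₁, κ₂ ∈ ℂ and let y, z : ℂ → ℂ be holomorphic. Define the 3×3 matrices B(λ,t) = [[−1, λ+y, 0],[0, −1/2, λ],[0, 0, −1]] (which is invertible, with determinant −1/2), C(λ,t) = [[z+2y²+t, −1−κ₁, 0],[−y, −z/2, −1−κ₂],[1, 0, 0]], and D(λ,t) = [[−λ, z/2, 1+κ₂],[−1, y, 0],[0, −1/2, −y]]. Set A(λ,t) := B(λ,t)⁻¹·C(λ,t). Then the zero-curvature equation ∂A/∂t − ∂D/∂λ + A·D − D·A = 0 holds for all (λ,t) ∈ ℂ² if and only if y′ = y² + z + t/2 and z′ = −2y·z − (κ₁ − κ₂) hold for all t ∈ ℂ. -/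

import Mathlib

open Matrix Complex

noncomputable section

/-- The left coefficient matrix `B(λ,t)` of the `JKT₂` pair. -/
def B₁₀ (y : ℂ → ℂ) (l t : ℂ) : Matrix (Fin 3) (Fin 3) ℂ :=
  !![-1, l + y t, 0; 0, -1/2, l; 0, 0, -1]

/-- The right coefficient matrix `C(λ,t)` of the `JKT₂` pair. -/
def C₁₀ (κ₁ κ₂ : ℂ) (y z : ℂ → ℂ) (l t : ℂ) : Matrix (Fin 3) (Fin 3) ℂ :=
  !![z t + 2*(y t)^2 + t, -1-κ₁, 0; -y t, -(z t)/2, -1-κ₂; 1, 0, 0]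

/-- The `t`-coefficient matrix `D(λ,t)` of the `JKT₂` pair. -/
def D₁₀ (κ₂ : ℂ) (y z : ℂ → ℂ) (l t : ℂ) : Matrix (Fin 3) (Fin 3) ℂ :=
  !![-l, (z t)/2, 1+κ₂; -1, y t, 0; 0, -1/2, -y t]

lemma Binv_eq (y : ℂ → ℂ) (l t : ℂ) :
    (B₁₀ y l t)⁻¹ = !![-1, -2*(l + y t), -2*(l + y t)*l; 0, -2, -2*l; 0, 0, -1] := by
  apply Matrix.inv_eq_right_inv
  show B₁₀ y l t * _ = _
  rw [B₁₀, Matrix.mul_fin_three, Matrix.one_fin_three]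
  ext i j
  fin_cases i <;> fin_cases j <;> simp <;> ring

lemma A_eq (κ₁ κ₂ : ℂ) (y z : ℂ → ℂ) (l t : ℂ) :
    (B₁₀ y l t)⁻¹ * C₁₀ κ₁ κ₂ y z l t =
    !![(-2*l^2) + (-1)*t + 0*y t + (-1)*z t + 0*(y t * z t),
       (1+κ₁) + 0*t + 0*y t + l*z t + 1*(y t * z t),
       (2*(1+κ₂)*l) + 0*t + (2*(1+κ₂))*y t + 0*z t + 0*(y t * z t);
       (-2*l) + 0*t + 2*y t + 0*z t + 0*(y t * z t),
       0 + 0*t + 0*y t + 1*z t + 0*(y t * z t),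
       (2+2*κ₂) + 0*t + 0*y t + 0*z t + 0*(y t * z t);
       -1, 0, 0] := by
  rw [Binv_eq, C₁₀, Matrix.mul_fin_three]
  ext i j
  fin_cases i <;> fin_cases j <;> simp <;> ring

lemma deriv_gen {y z : ℂ → ℂ} (hy : Differentiable ℂ y) (hz : Differentiable ℂ z)
    (c0 c1 c2 c3 c4 t : ℂ) :
    deriv (fun s => c0 + c1*s + c2*y s + c3*z s + c4*(y s * z s)) t
      = c1 + c2*deriv y t + c3*deriv z t + c4*(deriv y t * z t + y t * deriv z t) := by
  have hyt := (hy t).hasDerivAt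
  have hzt := (hz t).hasDerivAt
  have h : HasDerivAt (fun s => c0 + c1*s + c2*y s + c3*z s + c4*(y s * z s))
      (0 + c1*1 + c2*deriv y t + c3*deriv z t
        + c4*(deriv y t * z t + y t * deriv z t)) t :=
    ((((hasDerivAt_const t c0).add ((hasDerivAt_id t).const_mul c1)).add
      (hyt.const_mul c2)).add (hzt.const_mul c3)).add ((hyt.mul hzt).const_mul c4)
  rw [h.deriv]; ring

lemma dA_eq (κ₁ κ₂ : ℂ) {y z : ℂ → ℂ} (hy : Differentiable ℂ y) (hz : Differentiable ℂ z)
    (l t : ℂ) :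
    (Matrix.of fun i j =>
        deriv (fun s => ((B₁₀ y l s)⁻¹ * C₁₀ κ₁ κ₂ y z l s) i j) t)
      = !![-1 - deriv z t, l*deriv z t + (deriv y t * z t + y t * deriv z t),
            2*(1+κ₂)*deriv y t;
           2*deriv y t, deriv z t, 0; 0, 0, 0] := by
  ext i j
  simp only [Matrix.of_apply, A_eq]
  fin_cases i <;> fin_cases j
  · show deriv (fun s => (-2*l^2) + (-1)*s + 0*y s + (-1)*z s + 0*(y s * z s)) t
        = -1 - deriv z t
    rw [deriv_gen hy hz]; ring
  · show deriv (fun s => (1+κ₁) + 0*s + 0*y s + l*z s + 1*(y s * z s)) t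
        = l*deriv z t + (deriv y t * z t + y t * deriv z t)
    rw [deriv_gen hy hz]; ring
  · show deriv (fun s => (2*(1+κ₂)*l) + 0*s + (2*(1+κ₂))*y s + 0*z s + 0*(y s * z s)) t
        = 2*(1+κ₂)*deriv y t
    rw [deriv_gen hy hz]; ring
  · show deriv (fun s => (-2*l) + 0*s + 2*y s + 0*z s + 0*(y s * z s)) t = 2*deriv y t
    rw [deriv_gen hy hz]; ring
  · show deriv (fun s => 0 + 0*s + 0*y s + 1*z s + 0*(y s * z s)) t = deriv z t
    rw [deriv_gen hy hz]; ring
  · show deriv (fun s => (2+2*κ₂) + 0*s + 0*y s + 0*z s + 0*(y s * z s)) t = (0 : ℂ)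
    rw [deriv_gen hy hz]; ring
  · exact deriv_const t (-1 : ℂ)
  · exact deriv_const t (0 : ℂ)
  · exact deriv_const t (0 : ℂ)

lemma dD_eq (κ₂ : ℂ) (y z : ℂ → ℂ) (l t : ℂ) :
    (Matrix.of fun i j => deriv (fun w => D₁₀ κ₂ y z w t i j) l)
      = !![-1, 0, 0; 0, 0, 0; 0, 0, 0] := by
  have hneg : deriv (fun w : ℂ => -w) l = -1 := by
    simpa using ((hasDerivAt_id l).neg).deriv
  ext i j
  simp only [Matrix.of_apply, D₁₀]
  fin_cases i <;> fin_cases j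
  · exact hneg
  · exact deriv_const l _
  · exact deriv_const l _
  · exact deriv_const l _
  · exact deriv_const l _
  · exact deriv_const l _
  · exact deriv_const l _
  · exact deriv_const l _
  · exact deriv_const l _

lemma ZC_eq (κ₁ κ₂ : ℂ) {y z : ℂ → ℂ} (hy : Differentiable ℂ y) (hz : Differentiable ℂ z)
    (l t : ℂ) :
    (Matrix.of fun i j =>
        deriv (fun s => ((B₁₀ y l s)⁻¹ * C₁₀ κ₁ κ₂ y z l s) i j) t)
      - (Matrix.of fun i j => deriv (fun w => D₁₀ κ₂ y z w t i j) l)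
      + ((B₁₀ y l t)⁻¹ * C₁₀ κ₁ κ₂ y z l t) * D₁₀ κ₂ y z l t
      - D₁₀ κ₂ y z l t * ((B₁₀ y l t)⁻¹ * C₁₀ κ₁ κ₂ y z l t)
    = !![-(deriv z t) + κ₂ - κ₁ - 2*y t*z t,
         z t*deriv y t - z t*t/2 - (z t)^2 + y t*deriv z t - y t*κ₂ + y t*κ₁
           + (y t)^2*z t + l*deriv z t - l*κ₂ + l*κ₁ + 2*l*(y t)*(z t),
         2*deriv y t + 2*κ₂*deriv y t - t - t*κ₂ - 2*z t - 2*(z t)*κ₂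
           - 2*(y t)^2 - 2*(y t)^2*κ₂;
         2*deriv y t - t - 2*z t - 2*(y t)^2,
         deriv z t - κ₂ + κ₁ + 2*(y t)*(z t), 0;
         0, 0, 0] := by
  rw [dA_eq κ₁ κ₂ hy hz, dD_eq, A_eq, D₁₀, Matrix.mul_fin_three, Matrix.mul_fin_three]
  ext i j
  fin_cases i <;> fin_cases j <;> simp [Matrix.vecHead, Matrix.vecTail] <;> first | ring | rfl

/-- `B(λ,t)` is invertible with determinant `−1/2`, and with `A := B⁻¹·C` the
zero-curvature equation `∂A/∂t − ∂D/∂λ + A·D − D·A = 0` holds identically iff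
`y' = y² + z + t/2` and `z' = −2yz − (κ₁ − κ₂)`. -/
theorem stmt_10 (κ₁ κ₂ : ℂ) (y z : ℂ → ℂ)
    (hy : Differentiable ℂ y) (hz : Differentiable ℂ z) :
    (∀ l t : ℂ, (B₁₀ y l t).det = -1/2 ∧ IsUnit (B₁₀ y l t)) ∧
    ((∀ l t : ℂ,
      (Matrix.of fun i j =>
          deriv (fun s => ((B₁₀ y l s)⁻¹ * C₁₀ κ₁ κ₂ y z l s) i j) t)
        - (Matrix.of fun i j => deriv (fun w => D₁₀ κ₂ y z w t i j) l)
        + ((B₁₀ y l t)⁻¹ * C₁₀ κ₁ κ₂ y z l t) * D₁₀ κ₂ y z l t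
        - D₁₀ κ₂ y z l t * ((B₁₀ y l t)⁻¹ * C₁₀ κ₁ κ₂ y z l t) = 0)
    ↔ (∀ t : ℂ, deriv y t = (y t)^2 + z t + t/2 ∧
        deriv z t = -2*(y t)*(z t) - (κ₁ - κ₂))) := by
  have hdet : ∀ l t : ℂ, (B₁₀ y l t).det = -1/2 := by
    intro l t
    norm_num [B₁₀, Matrix.det_fin_three, Matrix.vecHead, Matrix.vecTail, Matrix.cons_val_two]
  refine ⟨fun l t => ⟨hdet l t, ?_⟩, ?_⟩
  · rw [Matrix.isUnit_iff_isUnit_det, hdet l t]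
    exact isUnit_iff_ne_zero.2 (by norm_num)
  constructor
  · intro h t
    have H := (ZC_eq κ₁ κ₂ hy hz 0 t).symm.trans (h 0 t)
    have h10 := congrFun (congrFun H 1) 0
    have h11 := congrFun (congrFun H 1) 1
    simp [Matrix.vecHead, Matrix.vecTail] at h10 h11
    constructor
    · linear_combination h10 / 2
    · linear_combination h11
  · intro h l t
    rw [ZC_eq κ₁ κ₂ hy hz l t]
    obtain ⟨e1, e2⟩ := h t
    ext i j
    fin_cases i <;> fin_cases j <;>
      simp only [Matrix.cons_val', Matrix.cons_val_zero, Matrix.cons_val_one,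
        Matrix.head_cons, Matrix.empty_val', Matrix.cons_val_fin_one,
        Matrix.cons_val_two, Matrix.tail_cons, Matrix.vecHead, Matrix.vecTail,
        Matrix.zero_apply, Fin.mk_zero, Fin.mk_one, e1, e2] <;>
      (try simp [Matrix.vecHead, Matrix.vecTail]) <;> first | ring | rfl
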